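/- Let G be a connected graph (with a loop at every vertex), r ≡ 0 (mod 3), r ≥ 6, diam(G) ≥ r. The relation x ∼ y iff d(x,y) ≤ 2, restricted to the set X of insufficient vertices, is an equivalence relation on X. -/

import Mathlib

/-- The ball of radius `r` around `v` (the `r`-th neighbourhood `N^r(v)`). -/
def SimpleGraph.nbhdBall {V : Type*} (G : SimpleGraph V) (r : ℕ) (v : V) : Set V :=
  {u : V | G.dist v u ≤ r}

/-- A vertex is *sufficient* if `|N^r(v)| ≥ (r/3 + 1)·δ`, where `δ = G.minDegree + 1`
is the minimum degree of the graph with a loop at every vertex. -/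
def SimpleGraph.Sufficient {V : Type*} [Fintype V] (G : SimpleGraph V)
    [DecidableRel G.Adj] (r : ℕ) (v : V) : Prop :=
  (r / 3 + 1) * (G.minDegree + 1) ≤ (G.nbhdBall r v).ncard

namespace EdgeGrowthAux

open SimpleGraph

variable {V : Type*}

/-- distance from the start of a walk to its `i`-th vertex is at most `i`. -/
lemma dist_getVert_le {G : SimpleGraph V} (hG : G.Connected) {a b : V} (W : G.Walk a b)
    (i : ℕ) : G.dist a (W.getVert i) ≤ i := by
  induction W generalizing i with
  | nil => cases i <;> simp [SimpleGraph.Walk.getVert, SimpleGraph.dist_self]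
  | @cons u v w h q ih =>
    cases i with
    | zero => simp [SimpleGraph.Walk.getVert, SimpleGraph.dist_self]
    | succ n =>
      have h1 : G.dist u v ≤ 1 := by
        simpa using SimpleGraph.dist_le (SimpleGraph.Walk.cons h SimpleGraph.Walk.nil)
      calc G.dist u ((SimpleGraph.Walk.cons h q).getVert (n+1))
          ≤ G.dist u v + G.dist v (q.getVert n) := hG.dist_triangle
        _ ≤ 1 + n := Nat.add_le_add h1 (ih n)
        _ = n + 1 := Nat.add_comm _ _

/-- distance from the `i`-th vertex of a walk to its end is at most `length - i`. -/
lemma getVert_dist_le {G : SimpleGraph V} {a b : V} (W : G.Walk a b)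
    (i : ℕ) : G.dist (W.getVert i) b ≤ W.length - i := by
  induction W generalizing i with
  | nil => cases i <;> simp [SimpleGraph.Walk.getVert, SimpleGraph.dist_self]
  | @cons u v w h q ih =>
    cases i with
    | zero =>
      simpa using SimpleGraph.dist_le (SimpleGraph.Walk.cons h q)
    | succ n =>
      simpa using ih n

/-- On a geodesic walk, the `i`-th vertex is at distance exactly `i` from the start. -/
lemma dist_getVert_eq {G : SimpleGraph V} (hG : G.Connected) {a b : V} (W : G.Walk a b)
    (hW : W.length = G.dist a b) {i : ℕ} (hi : i ≤ W.length) :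
    G.dist a (W.getVert i) = i := by
  refine le_antisymm (dist_getVert_le hG W i) ?_
  have h1 : G.dist a b ≤ G.dist a (W.getVert i) + G.dist (W.getVert i) b := hG.dist_triangle
  have h2 := getVert_dist_le W i
  omega

/-- Packing lemma: `n` centers, pairwise at distance at least 3, whose closed unit balls
lie in `G.ball r v`, force `(G.ball r v).ncard ≥ n * (minDegree + 1)`. -/
lemma pack {G : SimpleGraph V} [Fintype V] [DecidableRel G.Adj] (hG : G.Connected)
    (r n : ℕ) (v : V) (c : ℕ → V)
    (hn : ∀ i < n, ∀ y : V, G.dist (c i) y ≤ 1 → G.dist v y ≤ r)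
    (hp : ∀ i < n, ∀ j < n, i < j → 3 ≤ G.dist (c i) (c j)) :
    n * (G.minDegree + 1) ≤ (G.nbhdBall r v).ncard := by
  classical
  set Nb : ℕ → Finset V := fun i => insert (c i) (G.neighborFinset (c i)) with hNb
  have hmem : ∀ i, ∀ y ∈ Nb i, G.dist (c i) y ≤ 1 := by
    intro i y hy
    rcases Finset.mem_insert.mp hy with h | h
    · subst h; simp [SimpleGraph.dist_self]
    · have : G.Adj (c i) y := by simpa using h
      exact le_of_eq (SimpleGraph.dist_eq_one_iff_adj.mpr this)
  have hcard : ∀ i, G.minDegree + 1 ≤ (Nb i).card := by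
    intro i
    rw [hNb]
    rw [Finset.card_insert_of_notMem (G.notMem_neighborFinset_self (c i))]
    have := G.minDegree_le_degree (c i)
    rw [← G.card_neighborFinset_eq_degree (c i)] at this
    omega
  have hdisj : ∀ i ∈ Finset.range n, ∀ j ∈ Finset.range n, i ≠ j →
      Disjoint (Nb i) (Nb j) := by
    intro i hi j hj hij
    rw [Finset.disjoint_left]
    intro y hyi hyj
    have d1 := hmem i y hyi
    have d2 := hmem j y hyj
    have htri : G.dist (c i) (c j) ≤ G.dist (c i) y + G.dist y (c j) := hG.dist_triangle
    rw [SimpleGraph.dist_comm (u := y)] at htri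
    rcases Nat.lt_or_ge i j with h | h
    · have := hp i (Finset.mem_range.mp hi) j (Finset.mem_range.mp hj) h
      omega
    · have hlt : j < i := lt_of_le_of_ne h (Ne.symm hij)
      have := hp j (Finset.mem_range.mp hj) i (Finset.mem_range.mp hi) hlt
      rw [SimpleGraph.dist_comm] at this
      omega
  set F : Finset V := (Finset.range n).biUnion Nb with hF
  have hFcard : n * (G.minDegree + 1) ≤ F.card := by
    rw [hF, Finset.card_biUnion hdisj]
    calc n * (G.minDegree + 1) = ∑ _i ∈ Finset.range n, (G.minDegree + 1) := by
          simp [Finset.sum_const, Nat.mul_comm]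
      _ ≤ ∑ i ∈ Finset.range n, (Nb i).card := Finset.sum_le_sum fun i _ => hcard i
  have hsub : (F : Set V) ⊆ G.nbhdBall r v := by
    intro y hy
    simp only [hF, Finset.coe_biUnion, Set.mem_iUnion, Finset.mem_coe] at hy
    obtain ⟨i, hi, hyi⟩ := hy
    simp only [Finset.mem_coe, Finset.mem_range] at hi
    exact hn i hi y (hmem i y hyi)
  calc n * (G.minDegree + 1) ≤ F.card := hFcard
    _ = (F : Set V).ncard := (Set.ncard_coe_finset F).symm
    _ ≤ (G.nbhdBall r v).ncard := Set.ncard_le_ncard hsub (Set.toFinite _)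

/-- Any insufficient vertex has some vertex at distance at least `r + 1`. -/
lemma exists_far {G : SimpleGraph V} [Fintype V] [DecidableRel G.Adj] (hG : G.Connected)
    {r : ℕ} (hr3 : r % 3 = 0) (hdiam : ∃ u w : V, r ≤ G.dist u w)
    {v : V} (hv : ¬ G.Sufficient r v) : ∃ F : V, r + 1 ≤ G.dist v F := by
  by_contra hcon
  push_neg at hcon
  apply hv
  obtain ⟨u, w, huw⟩ := hdiam
  obtain ⟨W, hW⟩ := (hG u w).exists_walk_length_eq_dist
  have hrL : r ≤ W.length := by omega
  refine pack hG r (r / 3 + 1) v (fun i => W.getVert (3 * i)) ?_ ?_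
  · intro i _ y _
    have := hcon y
    omega
  · intro i hi j hj hij
    show 3 ≤ G.dist (W.getVert (3 * i)) (W.getVert (3 * j))
    have h3j : 3 * j ≤ W.length := by omega
    have hdj : G.dist u (W.getVert (3 * j)) = 3 * j := dist_getVert_eq hG W hW h3j
    have hdi : G.dist u (W.getVert (3 * i)) ≤ 3 * i := dist_getVert_le hG W (3 * i)
    have htri : G.dist u (W.getVert (3 * j)) ≤
        G.dist u (W.getVert (3 * i)) + G.dist (W.getVert (3 * i)) (W.getVert (3 * j)) :=
      hG.dist_triangle
    omega

/-- Core construction: if `z` is at distance `3 ≤ t ≤ 4` from `x`, has a vertex at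
distance `≥ r+1`, and there exists `q` with `3 ≤ d(z,q) ≤ t` and `d(x,q) ≥ 3`,
then `z` is sufficient. -/
lemma sufficient_of_witness {G : SimpleGraph V} [Fintype V] [DecidableRel G.Adj]
    (hG : G.Connected) {r : ℕ} (hr3 : r % 3 = 0) (hr : 6 ≤ r) {x z F q : V}
    (ht3 : 3 ≤ G.dist x z) (ht4 : G.dist x z ≤ 4)
    (hF : r + 1 ≤ G.dist z F)
    (hq1 : 3 ≤ G.dist z q) (hq2 : G.dist z q ≤ G.dist x z) (hq3 : 3 ≤ G.dist x q) :
    G.Sufficient r z := by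
  classical
  obtain ⟨W, hW⟩ := (hG z F).exists_walk_length_eq_dist
  set t : ℕ := G.dist x z with htdef
  set c : ℕ → V := fun i =>
    if i = 0 then z else if i = 1 then x else if i = 2 then q
    else W.getVert (t + 3 * (i - 2)) with hc
  have hzx : G.dist z x = t := by rw [SimpleGraph.dist_comm]
  have hlen : r + 1 ≤ W.length := by omega
  -- distance from z to the path centers
  have hgd : ∀ i, 3 ≤ i → i ≤ r / 3 → G.dist z (c i) = t + 3 * (i - 2) := by
    intro i h3 hub
    have hle : t + 3 * (i - 2) ≤ W.length := by omega
    have : c i = W.getVert (t + 3 * (i - 2)) := by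
      simp only [hc]
      rw [if_neg (by omega), if_neg (by omega), if_neg (by omega)]
    rw [this]
    exact dist_getVert_eq hG W hW hle
  have hcd : ∀ i ≤ r / 3, G.dist z (c i) ≤ r - 1 := by
    intro i hi
    rcases Nat.lt_or_ge i 3 with h | h
    · interval_cases i <;> simp only [hc] <;> simp [SimpleGraph.dist_self] <;> omega
    · rw [hgd i h hi]; omega
  have key := pack hG r (r / 3 + 1) z c ?_ ?_
  · exact key
  · intro i hi y hy
    have h1 := hcd i (by omega)
    have : G.dist z y ≤ G.dist z (c i) + G.dist (c i) y := hG.dist_triangle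
    omega
  · have hc0 : c 0 = z := by simp [hc]
    have hc1 : c 1 = x := by simp [hc]
    have hc2 : c 2 = q := by simp [hc]
    intro i hi j hj hij
    rcases Nat.lt_or_ge j 3 with hj3 | hj3
    · -- j ∈ {1, 2}, so (i,j) ∈ {(0,1),(0,2),(1,2)}
      interval_cases j <;> interval_cases i <;> simp only [hc0, hc1, hc2] <;> omega
    · have hdzj : G.dist z (c j) = t + 3 * (j - 2) := hgd j hj3 (by omega)
      rcases Nat.lt_or_ge i 3 with hi3 | hi3
      · have htri : G.dist z (c j) ≤ G.dist z (c i) + G.dist (c i) (c j) := hG.dist_triangle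
        have hdzi : G.dist z (c i) ≤ t := by
          interval_cases i
          · rw [hc0]; simp [SimpleGraph.dist_self]
          · rw [hc1]; omega
          · rw [hc2]; exact hq2
        omega
      · -- both path centers
        have hdzi : G.dist z (c i) = t + 3 * (i - 2) := hgd i hi3 (by omega)
        have htri : G.dist z (c j) ≤ G.dist z (c i) + G.dist (c i) (c j) := hG.dist_triangle
        omega

/-- Discrete continuity for natural-valued functions changing by at most one per step. -/
lemma discrete_cross (f : ℕ → ℕ) (a b cval : ℕ) (hab : a ≤ b)
    (hstep : ∀ j, a ≤ j → j < b → f (j + 1) ≤ f j + 1)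
    (ha : f a ≤ cval) (hb : cval + 1 ≤ f b) :
    ∃ j, a < j ∧ j ≤ b ∧ f j = cval + 1 := by
  induction b, hab using Nat.le_induction with
  | base => omega
  | succ m hm ih =>
    rcases Nat.lt_or_ge (f m) (cval + 1) with h | h
    · refine ⟨m + 1, by omega, le_refl _, ?_⟩
      have := hstep m hm (by omega)
      omega
    · obtain ⟨j, hj1, hj2, hj3⟩ := ih (fun j hja hjm => hstep j hja (by omega)) h
      exact ⟨j, hj1, by omega, hj3⟩

/-- Two insufficient vertices at distance at most 4 are at distance at most 2. -/
lemma key_lemma {G : SimpleGraph V} [Fintype V] [DecidableRel G.Adj] (hG : G.Connected)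
    {r : ℕ} (hr3 : r % 3 = 0) (hr : 6 ≤ r) (hdiam : ∃ u w : V, r ≤ G.dist u w)
    {x z : V} (hx : ¬ G.Sufficient r x) (hz : ¬ G.Sufficient r z)
    (h4 : G.dist x z ≤ 4) : G.dist x z ≤ 2 := by
  by_contra hcon
  have ht3 : 3 ≤ G.dist x z := by omega
  obtain ⟨Fx, hFx⟩ := exists_far hG hr3 hdiam hx
  obtain ⟨Fz, hFz⟩ := exists_far hG hr3 hdiam hz
  have hzx4 : G.dist z x ≤ 4 := by rw [SimpleGraph.dist_comm]; exact h4
  have hzx3 : 3 ≤ G.dist z x := by rw [SimpleGraph.dist_comm]; exact ht3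
  -- badness conditions
  have hBz : ∀ q : V, 3 ≤ G.dist z q → G.dist z q ≤ G.dist x z → G.dist x q ≤ 2 := by
    intro q h1 h2
    by_contra hq
    exact hz (sufficient_of_witness hG hr3 hr ht3 h4 hFz h1 h2 (by omega))
  have hBx : ∀ q : V, 3 ≤ G.dist x q → G.dist x q ≤ G.dist x z → G.dist z q ≤ 2 := by
    intro q h1 h2
    by_contra hq
    refine hx (sufficient_of_witness hG hr3 hr hzx3 hzx4 hFx h1 ?_ (by omega))
    rw [SimpleGraph.dist_comm (u := z)]; exact h2
  -- walk from x to its far vertex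
  obtain ⟨W, hW⟩ := (hG x Fx).exists_walk_length_eq_dist
  have hlen : r + 1 ≤ W.length := by omega
  set t : ℕ := G.dist x z with htdef
  set f : ℕ → ℕ := fun j => G.dist z (W.getVert j) with hf
  have hx3 : G.dist x (W.getVert 3) = 3 := dist_getVert_eq hG W hW (by omega)
  have hf3 : f 3 ≤ 2 := hBx (W.getVert 3) (by omega) (by omega)
  have hxt3 : G.dist x (W.getVert (t + 3)) = t + 3 := dist_getVert_eq hG W hW (by omega)
  have hft3 : 3 ≤ f (t + 3) := by
    have htri : G.dist x (W.getVert (t + 3)) ≤ G.dist x z + G.dist z (W.getVert (t + 3)) :=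
      hG.dist_triangle
    simp only [hf]
    omega
  have hstep : ∀ j, 3 ≤ j → j < t + 3 → f (j + 1) ≤ f j + 1 := by
    intro j _ hjb
    have hadj : G.Adj (W.getVert j) (W.getVert (j + 1)) :=
      W.adj_getVert_succ (by omega)
    have h1 : G.dist (W.getVert j) (W.getVert (j + 1)) = 1 :=
      SimpleGraph.dist_eq_one_iff_adj.mpr hadj
    have htri : G.dist z (W.getVert (j + 1)) ≤
        G.dist z (W.getVert j) + G.dist (W.getVert j) (W.getVert (j + 1)) := hG.dist_triangle
    simp only [hf]
    omega
  obtain ⟨j, hj1, hj2, hj3⟩ := discrete_cross f 3 (t + 3) 2 (by omega) hstep hf3 hft3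
  have hdzq : G.dist z (W.getVert j) = 3 := hj3
  have hdxq : G.dist x (W.getVert j) = j := dist_getVert_eq hG W hW (by omega)
  have := hBz (W.getVert j) (by omega) (by omega)
  omega

end EdgeGrowthAux

/-- the relation `x ∼ y ↔ d(x,y) ≤ 2`, restricted to the set of
insufficient vertices, is an equivalence relation. -/
theorem edge_growth_insufficient_equivalence {V : Type*} [Fintype V]
    (G : SimpleGraph V) [DecidableRel G.Adj] (hG : G.Connected)
    (r : ℕ) (hr3 : r % 3 = 0) (hr : 6 ≤ r)
    (hdiam : ∃ u w : V, r ≤ G.dist u w) :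
    Equivalence (fun a b : {v : V // ¬ G.Sufficient r v} => G.dist a.1 b.1 ≤ 2) := by
  constructor
  · intro a
    simp [SimpleGraph.dist_self]
  · intro a b hab
    rw [SimpleGraph.dist_comm]
    exact hab
  · intro a b c hab hbc
    have h4 : G.dist a.1 c.1 ≤ 4 := by
      have := hG.dist_triangle (u := a.1) (v := b.1) (w := c.1)
      omega
    exact EdgeGrowthAux.key_lemma hG hr3 hr hdiam a.2 c.2 h4
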